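/- Define J_{n:-m}(a) = (Re(w), −Im(w), (|a₁|²/m + |a₂|²/n)/2) with w = a₁^m·conj(a₂)^n/(√(nm)·|a₁|^{m-1}·|a₂|^{n-1}), and R_{n:-m}(a) = (|a₁|²/m − |a₂|²/n)/2, for a₁, a₂ ∈ ℂ×. Then μ₃² − μ₁² − μ₂² = R_{n:-m}(a)² where (μ₁,μ₂,μ₃) = J_{n:-m}(a). -/

import Mathlib

/-- `J_{n:-m}` viewed as a map to ℝ³. -/
noncomputable def Jnmm (n m : ℕ) (a : ℂ × ℂ) : ℝ × ℝ × ℝ :=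
  let w : ℂ := a.1 ^ m * ((starRingEnd ℂ) a.2) ^ n
    / ((Real.sqrt (n * m) : ℂ) * (‖a.1‖ : ℂ) ^ (m - 1)
        * (‖a.2‖ : ℂ) ^ (n - 1))
  (w.re, -w.im, (‖a.1‖ ^ 2 / m + ‖a.2‖ ^ 2 / n) / 2)

/-- `R_{n:-m}`. -/
noncomputable def Rnmm (n m : ℕ) (a : ℂ × ℂ) : ℝ :=
  (‖a.1‖ ^ 2 / m - ‖a.2‖ ^ 2 / n) / 2

theorem stmt_13 (n m : ℕ) (hn : 1 ≤ n) (hm : 1 ≤ m)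
    (a : ℂ × ℂ) (h₁ : a.1 ≠ 0) (h₂ : a.2 ≠ 0) :
    (Jnmm n m a).2.2 ^ 2 - (Jnmm n m a).1 ^ 2 - (Jnmm n m a).2.1 ^ 2
      = Rnmm n m a ^ 2 := by
  obtain ⟨m', rfl⟩ : ∃ k, m = k + 1 := ⟨m - 1, by omega⟩
  obtain ⟨n', rfl⟩ : ∃ k, n = k + 1 := ⟨n - 1, by omega⟩
  simp only [Jnmm, Rnmm, Nat.add_sub_cancel]
  set r1 := ‖a.1‖ with hr1def
  set r2 := ‖a.2‖ with hr2def
  have hr1 : 0 < r1 := norm_pos_iff.2 h₁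
  have hr2 : 0 < r2 := norm_pos_iff.2 h₂
  have hN : (0:ℝ) < ((n' + 1 : ℕ) : ℝ) := by positivity
  have hM : (0:ℝ) < ((m' + 1 : ℕ) : ℝ) := by positivity
  have hNM : (0:ℝ) < ((n' + 1 : ℕ) : ℝ) * ((m' + 1 : ℕ) : ℝ) := by positivity
  have hs : (0:ℝ) < Real.sqrt (((n' + 1 : ℕ) : ℝ) * ((m' + 1 : ℕ) : ℝ)) :=
    Real.sqrt_pos.2 hNM
  set w : ℂ := a.1 ^ (m' + 1) * ((starRingEnd ℂ) a.2) ^ (n' + 1)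
    / ((Real.sqrt (((n' + 1 : ℕ) : ℝ) * ((m' + 1 : ℕ) : ℝ)) : ℂ) * (r1 : ℂ) ^ m'
        * (r2 : ℂ) ^ n') with hwdef
  have habs : ‖w‖
      = r1 * r2 / Real.sqrt (((n' + 1 : ℕ) : ℝ) * ((m' + 1 : ℕ) : ℝ)) := by
    simp only [hwdef, norm_div, norm_mul, norm_pow, Complex.norm_conj,
      Complex.norm_real, Real.norm_eq_abs, abs_of_nonneg (Real.sqrt_nonneg _),
      abs_of_nonneg hr1.le, abs_of_nonneg hr2.le, ← hr1def, ← hr2def]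
    rw [pow_succ, pow_succ]
    field_simp
  have hsq : w.re ^ 2 + w.im ^ 2
      = r1 ^ 2 * r2 ^ 2 / (((n' + 1 : ℕ) : ℝ) * ((m' + 1 : ℕ) : ℝ)) := by
    have h1 : ‖w‖ ^ 2 = w.re ^ 2 + w.im ^ 2 := by
      rw [Complex.sq_norm, Complex.normSq_apply]; ring
    rw [← h1, habs, div_pow, Real.sq_sqrt hNM.le]
    ring
  have key : ((r1 ^ 2 / ((m' + 1 : ℕ) : ℝ) + r2 ^ 2 / ((n' + 1 : ℕ) : ℝ)) / 2) ^ 2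
      - (w.re ^ 2 + w.im ^ 2)
      = ((r1 ^ 2 / ((m' + 1 : ℕ) : ℝ) - r2 ^ 2 / ((n' + 1 : ℕ) : ℝ)) / 2) ^ 2 := by
    rw [hsq]; field_simp; ring
  have hneg : (-w.im) ^ 2 = w.im ^ 2 := by ring
  rw [hneg] at *
  linarith [key]
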